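/- For the complete {1,2,r}-hypergraph K_t^{{1,2,r}} on t vertices and positive constants α_2, α_r, the maximum over the standard simplex of L(x) = Σ_i x_i + α_2 Σ_{i<j} x_i x_j + α_r Σ_{|e|=r, e⊆[t]} Π_{i∈e} x_i equals 1 + α_2 (t-1)/(2t) + α_r Π_{i=1}^{r-1}(t-i)/(r! t^{r-1}), attained at x_i = 1/t for all i. -/

import Mathlib

open Finset

def stdSimplex' (n : ℕ) : Set (Fin n → ℝ) :=
  {x | (∀ i, 0 ≤ x i) ∧ ∑ i, x i = 1}

section Smoothing

variable {t : ℕ}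

/-- Averaging coordinates `i` and `j`. -/
noncomputable def smv (x : Fin t → ℝ) (i j : Fin t) : Fin t → ℝ :=
  fun k => if k = i ∨ k = j then (x i + x j) / 2 else x k

lemma smv_apply_i (x : Fin t → ℝ) (i j : Fin t) : smv x i j i = (x i + x j) / 2 := by simp [smv]
lemma smv_apply_j (x : Fin t → ℝ) (i j : Fin t) : smv x i j j = (x i + x j) / 2 := by simp [smv]
lemma smv_apply_ne (x : Fin t → ℝ) (i j k : Fin t) (hk : k ≠ i) (hk' : k ≠ j) :
    smv x i j k = x k := by simp [smv, hk, hk']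

lemma smv_nonneg (x : Fin t → ℝ) (hx : ∀ k, 0 ≤ x k) (i j k : Fin t) : 0 ≤ smv x i j k := by
  unfold smv; split
  · linarith [hx i, hx j]
  · exact hx k

lemma smv_sum (x : Fin t → ℝ) (i j : Fin t) (hij : i ≠ j) :
    ∑ k, smv x i j k = ∑ k, x k := by
  rw [← Finset.sum_compl_add_sum {i, j} (f := smv x i j),
    ← Finset.sum_compl_add_sum {i, j} (f := x)]
  congr 1
  · refine Finset.sum_congr rfl fun k hk => ?_
    simp only [Finset.mem_compl, Finset.mem_insert, Finset.mem_singleton, not_or] at hk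
    exact smv_apply_ne x i j k hk.1 hk.2
  · rw [Finset.sum_pair hij, Finset.sum_pair hij, smv_apply_i, smv_apply_j]
    ring

lemma smooth_term (x : Fin t → ℝ) (hx : ∀ k, 0 ≤ x k) (i j : Fin t) (hij : i ≠ j)
    (e : Finset (Fin t)) :
    (∏ k ∈ e, x k) + (∏ k ∈ e, x (Equiv.swap i j k)) ≤ 2 * ∏ k ∈ e, smv x i j k := by
  by_cases hie : i ∈ e <;> by_cases hje : j ∈ e
  · -- both
    have hje' : j ∈ e.erase i := Finset.mem_erase.2 ⟨hij.symm, hje⟩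
    have hrest : ∀ k ∈ (e.erase i).erase j, k ≠ i ∧ k ≠ j := by
      intro k hk
      exact ⟨(Finset.mem_erase.1 (Finset.mem_of_mem_erase hk)).1, (Finset.mem_erase.1 hk).1⟩
    have e2 : ∀ f : Fin t → ℝ, ∏ k ∈ e, f k = f i * (f j * ∏ k ∈ (e.erase i).erase j, f k) := by
      intro f
      rw [Finset.mul_prod_erase _ _ hje', Finset.mul_prod_erase _ _ hie]
    have hps : ∏ k ∈ (e.erase i).erase j, x (Equiv.swap i j k)
        = ∏ k ∈ (e.erase i).erase j, x k :=
      Finset.prod_congr rfl fun k hk => by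
        rw [Equiv.swap_apply_of_ne_of_ne (hrest k hk).1 (hrest k hk).2]
    have hpy : ∏ k ∈ (e.erase i).erase j, smv x i j k = ∏ k ∈ (e.erase i).erase j, x k :=
      Finset.prod_congr rfl fun k hk => smv_apply_ne x i j k (hrest k hk).1 (hrest k hk).2
    rw [e2 x, e2 (fun k => x (Equiv.swap i j k)), e2 (smv x i j), hps, hpy,
      Equiv.swap_apply_left, Equiv.swap_apply_right, smv_apply_i, smv_apply_j]
    have hP : 0 ≤ ∏ k ∈ (e.erase i).erase j, x k := Finset.prod_nonneg fun k _ => hx k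
    nlinarith [sq_nonneg (x i - x j), mul_nonneg (mul_nonneg (hx i) (hx j)) hP]
  · -- i only
    have hrest : ∀ k ∈ e.erase i, k ≠ i ∧ k ≠ j := fun k hk =>
      ⟨(Finset.mem_erase.1 hk).1, fun h => hje (h ▸ Finset.mem_of_mem_erase hk)⟩
    have e2 : ∀ f : Fin t → ℝ, ∏ k ∈ e, f k = f i * ∏ k ∈ e.erase i, f k := by
      intro f; rw [Finset.mul_prod_erase _ _ hie]
    have hps : ∏ k ∈ e.erase i, x (Equiv.swap i j k) = ∏ k ∈ e.erase i, x k :=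
      Finset.prod_congr rfl fun k hk => by
        rw [Equiv.swap_apply_of_ne_of_ne (hrest k hk).1 (hrest k hk).2]
    have hpy : ∏ k ∈ e.erase i, smv x i j k = ∏ k ∈ e.erase i, x k :=
      Finset.prod_congr rfl fun k hk => smv_apply_ne x i j k (hrest k hk).1 (hrest k hk).2
    rw [e2 x, e2 (fun k => x (Equiv.swap i j k)), e2 (smv x i j), hps, hpy,
      Equiv.swap_apply_left, smv_apply_i]
    ring_nf
    linarith
  · -- j only
    have hrest : ∀ k ∈ e.erase j, k ≠ i ∧ k ≠ j := fun k hk =>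
      ⟨fun h => hie (h ▸ Finset.mem_of_mem_erase hk), (Finset.mem_erase.1 hk).1⟩
    have e2 : ∀ f : Fin t → ℝ, ∏ k ∈ e, f k = f j * ∏ k ∈ e.erase j, f k := by
      intro f; rw [Finset.mul_prod_erase _ _ hje]
    have hps : ∏ k ∈ e.erase j, x (Equiv.swap i j k) = ∏ k ∈ e.erase j, x k :=
      Finset.prod_congr rfl fun k hk => by
        rw [Equiv.swap_apply_of_ne_of_ne (hrest k hk).1 (hrest k hk).2]
    have hpy : ∏ k ∈ e.erase j, smv x i j k = ∏ k ∈ e.erase j, x k :=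
      Finset.prod_congr rfl fun k hk => smv_apply_ne x i j k (hrest k hk).1 (hrest k hk).2
    rw [e2 x, e2 (fun k => x (Equiv.swap i j k)), e2 (smv x i j), hps, hpy,
      Equiv.swap_apply_right, smv_apply_j]
    ring_nf
    linarith
  · -- neither
    have hrest : ∀ k ∈ e, k ≠ i ∧ k ≠ j := fun k hk =>
      ⟨fun h => hie (h ▸ hk), fun h => hje (h ▸ hk)⟩
    have hps : ∏ k ∈ e, x (Equiv.swap i j k) = ∏ k ∈ e, x k :=
      Finset.prod_congr rfl fun k hk => by
        rw [Equiv.swap_apply_of_ne_of_ne (hrest k hk).1 (hrest k hk).2]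
    have hpy : ∏ k ∈ e, smv x i j k = ∏ k ∈ e, x k :=
      Finset.prod_congr rfl fun k hk => smv_apply_ne x i j k (hrest k hk).1 (hrest k hk).2
    rw [hps, hpy]
    ring_nf
    linarith

lemma sum_prod_swap (x : Fin t → ℝ) (i j : Fin t) (r : ℕ) :
    ∑ e ∈ (univ : Finset (Fin t)).powersetCard r, ∏ k ∈ e, x (Equiv.swap i j k)
      = ∑ e ∈ (univ : Finset (Fin t)).powersetCard r, ∏ k ∈ e, x k := by
  refine Finset.sum_nbij' (fun e => e.map (Equiv.swap i j).toEmbedding)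
    (fun e => e.map (Equiv.swap i j).toEmbedding) ?_ ?_ ?_ ?_ ?_
  · intro e he
    rw [Finset.mem_powersetCard_univ] at he ⊢
    rw [Finset.card_map]; exact he
  · intro e he
    rw [Finset.mem_powersetCard_univ] at he ⊢
    rw [Finset.card_map]; exact he
  · intro e _
    ext a
    simp [Finset.mem_map_equiv, Equiv.swap_apply_self]
  · intro e _
    ext a
    simp [Finset.mem_map_equiv, Equiv.swap_apply_self]
  · intro e _
    rw [Finset.prod_map]
    rfl

lemma smooth_sum_le (x : Fin t → ℝ) (hx : ∀ k, 0 ≤ x k) (i j : Fin t) (hij : i ≠ j) (r : ℕ) :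
    ∑ e ∈ (univ : Finset (Fin t)).powersetCard r, ∏ k ∈ e, x k
      ≤ ∑ e ∈ (univ : Finset (Fin t)).powersetCard r, ∏ k ∈ e, smv x i j k := by
  have h1 : ∑ e ∈ (univ : Finset (Fin t)).powersetCard r,
      ((∏ k ∈ e, x k) + (∏ k ∈ e, x (Equiv.swap i j k)))
      ≤ ∑ e ∈ (univ : Finset (Fin t)).powersetCard r, 2 * ∏ k ∈ e, smv x i j k :=
    Finset.sum_le_sum fun e _ => smooth_term x hx i j hij e
  rw [Finset.sum_add_distrib, sum_prod_swap, ← Finset.mul_sum] at h1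
  linarith

lemma smooth_sum_lt (x : Fin t → ℝ) (hx : ∀ k, 0 ≤ x k) (i j : Fin t) (hij : i ≠ j)
    (hne : x i ≠ x j) :
    ∑ e ∈ (univ : Finset (Fin t)).powersetCard 2, ∏ k ∈ e, x k
      < ∑ e ∈ (univ : Finset (Fin t)).powersetCard 2, ∏ k ∈ e, smv x i j k := by
  have hmem : ({i, j} : Finset (Fin t)) ∈ (univ : Finset (Fin t)).powersetCard 2 := by
    rw [Finset.mem_powersetCard_univ, Finset.card_pair hij]
  have h1 : ∑ e ∈ (univ : Finset (Fin t)).powersetCard 2,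
      ((∏ k ∈ e, x k) + (∏ k ∈ e, x (Equiv.swap i j k)))
      < ∑ e ∈ (univ : Finset (Fin t)).powersetCard 2, 2 * ∏ k ∈ e, smv x i j k := by
    refine Finset.sum_lt_sum (fun e _ => smooth_term x hx i j hij e) ⟨{i, j}, hmem, ?_⟩
    rw [Finset.prod_pair hij, Finset.prod_pair hij, Finset.prod_pair hij,
      Equiv.swap_apply_left, Equiv.swap_apply_right, smv_apply_i, smv_apply_j]
    nlinarith [(sq_pos_iff (a := x i - x j)).2 (sub_ne_zero_of_ne hne)]
  rw [Finset.sum_add_distrib, sum_prod_swap, ← Finset.mul_sum] at h1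
  linarith

end Smoothing

section Values

lemma unif_prod_sum (t k : ℕ) :
    ∑ e ∈ (univ : Finset (Fin t)).powersetCard k, ∏ _i ∈ e, ((1 : ℝ) / t)
      = (t.choose k : ℝ) * (1 / t) ^ k := by
  have h : ∀ e ∈ (univ : Finset (Fin t)).powersetCard k,
      ∏ _i ∈ e, ((1 : ℝ) / t) = (1 / (t:ℝ)) ^ k := by
    intro e he
    rw [Finset.prod_const, (Finset.mem_powersetCard_univ.1 he)]
  rw [Finset.sum_congr rfl h, Finset.sum_const, Finset.card_powersetCard, Finset.card_univ,
    Fintype.card_fin, nsmul_eq_mul]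

lemma choose_two_val (t : ℕ) (ht : 1 ≤ t) :
    (t.choose 2 : ℝ) * (1 / t) ^ 2 = ((t : ℝ) - 1) / (2 * t) := by
  have ht0 : (t : ℝ) ≠ 0 := Nat.cast_ne_zero.2 (by omega)
  rw [Nat.cast_choose_two]
  field_simp

lemma choose_r_val (t r : ℕ) (ht : 1 ≤ t) (hr : 1 ≤ r) :
    (t.choose r : ℝ) * (1 / t) ^ r
      = (∏ i ∈ Finset.Icc 1 (r - 1), ((t : ℝ) - i)) / (Nat.factorial r * (t : ℝ) ^ (r - 1)) := by
  have ht0 : (t : ℝ) ≠ 0 := Nat.cast_ne_zero.2 (by omega)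
  have hf0 : (Nat.factorial r : ℝ) ≠ 0 := Nat.cast_ne_zero.2 (Nat.factorial_ne_zero r)
  rcases le_or_gt r t with hrt | htr
  · -- r ≤ t
    have hd : ((t.descFactorial r : ℕ) : ℝ) = ∏ i ∈ Finset.range r, ((t : ℝ) - i) := by
      rw [Nat.descFactorial_eq_prod_range, Nat.cast_prod]
      refine Finset.prod_congr rfl fun i hi => ?_
      have : i ≤ t := le_trans (le_of_lt (Finset.mem_range.1 hi)) hrt
      push_cast [Nat.cast_sub this]
      ring
    have hsplit : Finset.range r = insert 0 (Finset.Icc 1 (r - 1)) := by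
      ext a
      simp only [Finset.mem_range, Finset.mem_insert, Finset.mem_Icc]
      omega
    have h0 : (0 : ℕ) ∉ Finset.Icc 1 (r - 1) := by simp
    have hd2 : ((t.descFactorial r : ℕ) : ℝ)
        = (t : ℝ) * ∏ i ∈ Finset.Icc 1 (r - 1), ((t : ℝ) - i) := by
      rw [hd, hsplit, Finset.prod_insert h0]
      norm_num
    have hfc : ((Nat.factorial r : ℕ) : ℝ) * (t.choose r : ℝ)
        = (t : ℝ) * ∏ i ∈ Finset.Icc 1 (r - 1), ((t : ℝ) - i) := by
      rw [← hd2, ← Nat.cast_mul, Nat.descFactorial_eq_factorial_mul_choose]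
    have hpow : (t : ℝ) ^ r = (t : ℝ) ^ (r - 1) * t := by
      rw [← pow_succ, Nat.sub_add_cancel hr]
    have hchoose : (t.choose r : ℝ)
        = (t : ℝ) * (∏ i ∈ Finset.Icc 1 (r - 1), ((t : ℝ) - i)) / Nat.factorial r := by
      field_simp at hfc ⊢
      linarith
    rw [hchoose, div_pow, one_pow, hpow]
    have hp0 : (t : ℝ) ^ (r - 1) ≠ 0 := pow_ne_zero _ ht0
    field_simp
  · -- t < r : both sides vanish
    rw [Nat.choose_eq_zero_of_lt htr]
    have hmem : t ∈ Finset.Icc 1 (r - 1) := Finset.mem_Icc.2 ⟨ht, by omega⟩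
    rw [Finset.prod_eq_zero hmem (by simp)]
    simp

end Values

/-- The weighted Lagrangian of the complete `{1,2,r}`-hypergraph on `t` vertices. -/
theorem stmt_6 (t r : ℕ) (ht : 1 ≤ t) (hr : 3 ≤ r) (α2 αr : ℝ) (hα2 : 0 < α2) (hαr : 0 < αr) :
    IsGreatest {y : ℝ | ∃ x ∈ stdSimplex' t,
        y = (∑ i, x i)
          + α2 * ∑ e ∈ (univ : Finset (Fin t)).powersetCard 2, ∏ i ∈ e, x i
          + αr * ∑ e ∈ (univ : Finset (Fin t)).powersetCard r, ∏ i ∈ e, x i}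
      (1 + α2 * (((t : ℝ) - 1) / (2 * t))
        + αr * (∏ i ∈ Finset.Icc 1 (r - 1), ((t : ℝ) - i)) / (Nat.factorial r * (t : ℝ) ^ (r - 1))) ∧
    ((∑ _i : Fin t, ((1 : ℝ) / t))
        + α2 * ∑ e ∈ (univ : Finset (Fin t)).powersetCard 2, ∏ _i ∈ e, ((1 : ℝ) / t)
        + αr * ∑ e ∈ (univ : Finset (Fin t)).powersetCard r, ∏ _i ∈ e, ((1 : ℝ) / t))
      = 1 + α2 * (((t : ℝ) - 1) / (2 * t))
        + αr * (∏ i ∈ Finset.Icc 1 (r - 1), ((t : ℝ) - i)) / (Nat.factorial r * (t : ℝ) ^ (r - 1)) := by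
  have ht0 : (t : ℝ) ≠ 0 := Nat.cast_ne_zero.2 (by omega)
  set L : (Fin t → ℝ) → ℝ := fun x => (∑ i, x i)
      + α2 * ∑ e ∈ (univ : Finset (Fin t)).powersetCard 2, ∏ i ∈ e, x i
      + αr * ∑ e ∈ (univ : Finset (Fin t)).powersetCard r, ∏ i ∈ e, x i with hL
  have husum : ∑ _i : Fin t, ((1 : ℝ) / t) = 1 := by
    rw [Finset.sum_const, Finset.card_univ, Fintype.card_fin, nsmul_eq_mul]
    field_simp
  have humem : (fun _ : Fin t => (1 : ℝ) / t) ∈ stdSimplex' t :=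
    ⟨fun i => by positivity, husum⟩
  have hval : L (fun _ => (1 : ℝ) / t)
      = 1 + α2 * (((t : ℝ) - 1) / (2 * t))
        + αr * (∏ i ∈ Finset.Icc 1 (r - 1), ((t : ℝ) - i))
          / (Nat.factorial r * (t : ℝ) ^ (r - 1)) := by
    rw [hL]
    simp only
    rw [husum, unif_prod_sum, unif_prod_sum, choose_two_val t ht, choose_r_val t r ht (by omega)]
    ring
  have hcont : Continuous L := by
    apply Continuous.add
    apply Continuous.add
    · exact continuous_finset_sum _ fun i _ => continuous_apply i
    · exact continuous_const.mul (continuous_finset_sum _ fun e _ =>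
        continuous_finset_prod _ fun k _ => continuous_apply k)
    · exact continuous_const.mul (continuous_finset_sum _ fun e _ =>
        continuous_finset_prod _ fun k _ => continuous_apply k)
  have hcpt : IsCompact (stdSimplex' t) := isCompact_stdSimplex ℝ (Fin t)
  obtain ⟨xs, hxs, hmax⟩ := hcpt.exists_isMaxOn ⟨_, humem⟩ hcont.continuousOn
  have hconst : ∀ i j, xs i = xs j := by
    by_contra hcon
    push_neg at hcon
    obtain ⟨i, j, hne⟩ := hcon
    have hij : i ≠ j := fun h => hne (by rw [h])
    have hy : smv xs i j ∈ stdSimplex' t :=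
      ⟨smv_nonneg xs hxs.1 i j, by rw [smv_sum xs i j hij]; exact hxs.2⟩
    have h1 := smooth_sum_lt xs hxs.1 i j hij hne
    have h2 := smooth_sum_le xs hxs.1 i j hij r
    have h3 : ∑ k, smv xs i j k = ∑ k, xs k := smv_sum xs i j hij
    have hle : L (smv xs i j) ≤ L xs := isMaxOn_iff.1 hmax _ hy
    rw [hL] at hle
    simp only at hle
    rw [h3] at hle
    nlinarith [mul_lt_mul_of_pos_left h1 hα2, mul_le_mul_of_nonneg_left h2 hαr.le]
  have hxs_eq : xs = fun _ => (1 : ℝ) / t := by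
    funext k
    have h1 : (t : ℝ) * xs k = 1 := by
      have h2 : ∑ _i : Fin t, xs k = ∑ i, xs i :=
        Finset.sum_congr rfl fun i _ => hconst k i
      rw [Finset.sum_const, Finset.card_univ, Fintype.card_fin, nsmul_eq_mul] at h2
      rw [h2]
      exact hxs.2
    field_simp at h1 ⊢
    linarith
  refine ⟨⟨⟨fun _ => (1 : ℝ) / t, humem, hval.symm⟩, ?_⟩, hval⟩
  rintro v ⟨x, hx, rfl⟩
  have hub : L x ≤ L xs := isMaxOn_iff.1 hmax _ hx
  rw [hxs_eq, hval] at hub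
  exact hub
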